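/- Let V be a finite-dimensional vector space over a finite field F, let X = (X_1,...,X_n) be a family of subspaces of V, and for subspaces Y ≤ V define f(Y) to be the number of indices i ∈ {1,...,n} with Y not contained in X_i. Then a subspace T ≤ V is a partial q-transversal of X if and only if f(Y) ≥ dim Y for every subspace Y ≤ T. -/

import Mathlib

/-- `T` is a partial q-transversal of the family `X` of subspaces of `V`: every
(vector-space) basis `b 1, …, b m` of `T` admits an injection `σ` into the index set
with `b i ∉ X (σ i)` for all `i`. -/
def IsPartialQTransversal {F V ι : Type*} [Field F] [AddCommGroup V] [Module F V]
    (X : ι → Submodule F V) (T : Submodule F V) : Prop :=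
  ∀ (m : ℕ) (b : Fin m → V), LinearIndependent F b → Submodule.span F (Set.range b) = T →
    ∃ σ : Fin m → ι, Function.Injective σ ∧ ∀ i, b i ∉ X (σ i)

/-- With `f Y` the number of indices `i` such that `Y` is not contained in `X i`, a
subspace `T` is a partial q-transversal of `X = (X 1, …, X n)` iff `f Y ≥ dim Y`
for every subspace `Y ≤ T`. -/
theorem isPartialQTransversal_iff_submodular_bound {F V : Type*} [Field F] [Fintype F]
    [AddCommGroup V] [Module F V] [FiniteDimensional F V]
    (n : ℕ) (X : Fin n → Submodule F V)
    (f : Submodule F V → ℕ)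
    (hf : ∀ Y : Submodule F V, f Y = Nat.card {i : Fin n // ¬ Y ≤ X i})
    (T : Submodule F V) :
    IsPartialQTransversal X T ↔ ∀ Y : Submodule F V, Y ≤ T → Module.finrank F Y ≤ f Y := by
  classical
  constructor
  · intro hT Y hYT
    set Y' : Submodule F T := Y.comap T.subtype with hY'def
    have eY : Y' ≃ₗ[F] Y := Submodule.comapSubtypeEquivOfLe hYT
    have hk : Module.finrank F Y' = Module.finrank F Y := eY.finrank_eq
    let bY : Module.Basis (Fin (Module.finrank F Y')) F Y' := Module.finBasis F Y'
    let v : Fin (Module.finrank F Y') → T := fun j => (bY j : T)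
    have hv : LinearIndependent F v :=
      bY.linearIndependent.map' Y'.subtype Y'.ker_subtype
    have hvinj : Function.Injective v :=
      Subtype.val_injective.comp bY.injective
    have hs : LinearIndepOn F id (Set.range v) := (linearIndepOn_id_range_iff hvinj).mpr hv
    let B : Module.Basis _ F T := Module.Basis.extend hs
    haveI : Fintype (hs.extend (Set.subset_univ (Set.range v))) :=
      FiniteDimensional.fintypeBasisIndex B
    let e : hs.extend (Set.subset_univ (Set.range v)) ≃ Fin (Module.finrank F T) :=
      Fintype.equivFinOfCardEq (Module.finrank_eq_card_basis B).symm
    let b : Fin (Module.finrank F T) → T := fun i => B.reindex e i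
    have hbli : LinearIndependent F b := (B.reindex e).linearIndependent
    let bV : Fin (Module.finrank F T) → V := fun i => (b i : V)
    have hbVli : LinearIndependent F bV :=
      hbli.map' T.subtype T.ker_subtype
    have hspan : Submodule.span F (Set.range bV) = T := by
      have h1 : Set.range bV = T.subtype '' Set.range b := by
        ext x; simp [bV, Set.range_comp]
      rw [h1, ← Submodule.map_span, (B.reindex e).span_eq, Submodule.map_subtype_top]
    obtain ⟨σ, hσinj, hσ⟩ := hT _ bV hbVli hspan
    have hmem : ∀ j, v j ∈ hs.extend (Set.subset_univ (Set.range v)) :=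
      fun j => hs.subset_extend _ ⟨j, rfl⟩
    let g : Fin (Module.finrank F Y') → Fin (Module.finrank F T) :=
      fun j => e ⟨v j, hmem j⟩
    have hbg : ∀ j, b (g j) = v j := by
      intro j
      show B.reindex e (e ⟨v j, hmem j⟩) = v j
      rw [Module.Basis.reindex_apply, Equiv.symm_apply_apply]
      exact Module.Basis.extend_apply_self hs _
    have hginj : Function.Injective g := by
      intro a c hac
      have := e.injective hac
      exact hvinj (by simpa using congrArg Subtype.val this)
    let h : Fin (Module.finrank F Y') → {i : Fin n // ¬ Y ≤ X i} := fun j =>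
      ⟨σ (g j), by
        intro hle
        exact hσ (g j) (hle (by
          have : (v j : V) ∈ Y := (bY j).2
          simpa [bV, hbg j] using this))⟩
    have hhinj : Function.Injective h := by
      intro a c hac
      exact hginj (hσinj (by simpa [h] using congrArg Subtype.val hac))
    have := Fintype.card_le_of_injective h hhinj
    rw [hf Y, Nat.card_eq_fintype_card]
    calc Module.finrank F Y = Module.finrank F Y' := hk.symm
      _ = Fintype.card (Fin (Module.finrank F Y')) := by simp
      _ ≤ _ := this
  · intro hf' m b hli hspan
    let t : Fin m → Finset (Fin n) := fun i => Finset.univ.filter (fun j => b i ∉ X j)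
    have hall : ∀ S : Finset (Fin m), S.card ≤ (S.biUnion t).card := by
      intro S
      set Y : Submodule F V := Submodule.span F (b '' S) with hYdef
      have hYT : Y ≤ T := by
        rw [← hspan]
        exact Submodule.span_mono ((Set.image_subset_range b S).trans le_rfl)
      have hres : LinearIndependent F (fun i : S => b i) :=
        hli.comp _ Subtype.val_injective
      have hdim : Module.finrank F Y = S.card := by
        have h1 := finrank_span_eq_card hres
        have h2 : Set.range (fun i : S => b i) = b '' S := by
          ext x; simp
        rw [h2] at h1
        rw [hYdef, h1, Fintype.card_coe]
      have hcard : f Y = (S.biUnion t).card := by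
        rw [hf Y, Nat.card_eq_fintype_card, Fintype.card_subtype]
        congr 1
        ext j
        simp only [Finset.mem_filter, Finset.mem_univ, true_and, Finset.mem_biUnion, t]
        constructor
        · intro hne
          by_contra hc
          push_neg at hc
          exact hne (Submodule.span_le.mpr (by
            rintro x ⟨i, hi, rfl⟩
            exact hc i hi))
        · rintro ⟨i, hi, hnot⟩ hle
          exact hnot (hle (Submodule.subset_span ⟨i, hi, rfl⟩))
      calc S.card = Module.finrank F Y := hdim.symm
        _ ≤ f Y := hf' Y hYT
        _ = (S.biUnion t).card := hcard
    obtain ⟨σ, hσinj, hσ⟩ := (Finset.all_card_le_biUnion_card_iff_existsInjective' t).mp hall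
    refine ⟨σ, hσinj, fun i => ?_⟩
    have := hσ i
    simpa [t] using this
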